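/- The number of maximal chains in Young's poset on $\binom{[m+p]}{p}$ equals the number of linear extensions of the product poset of an $m$-element chain and a $p$-element chain. -/

import Mathlib

/-- Young's poset: strictly increasing `p`-tuples in `{1,…,m+p}`, ordered componentwise. -/
def YoungPoset (m p : ℕ) : Type := {α : Fin p → Fin (m + p) // StrictMono α}

instance (m p : ℕ) : PartialOrder (YoungPoset m p) :=
  PartialOrder.lift (fun α => α.1) Subtype.val_injective

/-- The bottom element `(1,2,…,p)` of Young's poset. -/
def youngBot (m p : ℕ) : YoungPoset m p :=
  ⟨fun i => ⟨i.1, lt_of_lt_of_le i.2 (Nat.le_add_left p m)⟩,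
   fun _ _ h => Fin.mk_lt_mk.mpr h⟩

/-- The top element `(m+1,…,m+p)` of Young's poset. -/
def youngTop (m p : ℕ) : YoungPoset m p :=
  ⟨fun i => ⟨m + i.1, by omega⟩,
   fun _ _ h => Fin.mk_lt_mk.mpr (Nat.add_lt_add_left h m)⟩

namespace Stmt5

open Finset

variable {m p : ℕ}

lemma young_le_iff {α β : YoungPoset m p} : α ≤ β ↔ ∀ b, α.1 b ≤ β.1 b := Iff.rfl

lemma card_filter_val_lt {n k : ℕ} (h : k ≤ n) :
    (Finset.univ.filter fun a : Fin n => a.1 < k).card = k := by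
  induction k with
  | zero => simp
  | succ k ih =>
    have hins : (Finset.univ.filter fun a : Fin n => a.1 < k + 1)
        = insert (⟨k, h⟩ : Fin n) (Finset.univ.filter fun a : Fin n => a.1 < k) := by
      ext a
      simp only [Finset.mem_filter, Finset.mem_univ, true_and, Finset.mem_insert, Fin.ext_iff]
      omega
    rw [hins, Finset.card_insert_of_notMem (by simp), ih (by omega)]

/-- In Young's poset, a covering step increases exactly one coordinate by exactly one. -/
lemma covBy_step {α β : YoungPoset m p} (h : α ⋖ β) :
    ∃ b : Fin p, (β.1 b).1 = (α.1 b).1 + 1 ∧ ∀ b', b' ≠ b → β.1 b' = α.1 b' := by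
  have hle : ∀ b, α.1 b ≤ β.1 b := h.1.le
  have hne : α ≠ β := h.1.ne
  have hS : (Finset.univ.filter fun b : Fin p => α.1 b ≠ β.1 b).Nonempty := by
    rcases Finset.eq_empty_or_nonempty (Finset.univ.filter fun b : Fin p => α.1 b ≠ β.1 b)
      with he | hne'
    · exfalso
      apply hne
      apply Subtype.ext; funext b
      by_contra hb
      have hmem : b ∈ Finset.univ.filter fun b : Fin p => α.1 b ≠ β.1 b := by simp [hb]
      rw [he] at hmem
      exact absurd hmem (Finset.notMem_empty b)
    · exact hne'
  set S := Finset.univ.filter fun b : Fin p => α.1 b ≠ β.1 b with hSdef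
  set b := S.max' hS with hbdef
  have hbmem : b ∈ S := S.max'_mem hS
  have hbne : α.1 b ≠ β.1 b := by
    rw [hSdef] at hbmem; simpa using hbmem
  have hblt : α.1 b < β.1 b := lt_of_le_of_ne (hle b) hbne
  have key : ∀ b', b < b' → β.1 b' = α.1 b' := by
    intro b' hb'
    by_contra hcon
    have hmem : b' ∈ S := by
      rw [hSdef]; simp only [Finset.mem_filter, Finset.mem_univ, true_and]
      exact fun hq => hcon hq.symm
    exact absurd (S.le_max' b' hmem) (not_le.mpr hb')
  have hbound : (α.1 b).1 + 1 < m + p := by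
    have h1 : (α.1 b).1 < (β.1 b).1 := hblt
    have h2 := (β.1 b).2
    omega
  set γv : Fin p → Fin (m + p) :=
    fun b' => if b' = b then ⟨(α.1 b).1 + 1, hbound⟩ else α.1 b' with hγvdef
  have hγmono : StrictMono γv := by
    intro x y hxy
    rcases eq_or_ne x b with hxb | hx
    · have hy : y ≠ b := fun hyb => absurd hxy (by rw [hxb, hyb]; exact lt_irrefl _)
      have hby : b < y := hxb ▸ hxy
      have h1 : β.1 y = α.1 y := key y hby
      have h2 : β.1 b < β.1 y := β.2 hby
      simp only [hγvdef, if_pos hxb, if_neg hy]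
      have h2' := Fin.lt_def.mp h2
      have h3 : (α.1 b).1 < (β.1 b).1 := hblt
      have h4 : (β.1 y).1 = (α.1 y).1 := congrArg Fin.val h1
      exact Fin.lt_def.mpr (by show (α.1 b).1 + 1 < (α.1 y).1; omega)
    · rcases eq_or_ne y b with hyb | hy
      · have h1 : α.1 x < α.1 b := α.2 (hyb ▸ hxy)
        simp only [hγvdef, if_neg hx, if_pos hyb]
        have h1' := Fin.lt_def.mp h1
        exact Fin.lt_def.mpr (by show (α.1 x).1 < (α.1 b).1 + 1; omega)
      · simpa only [hγvdef, if_neg hx, if_neg hy] using α.2 hxy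
  set γ : YoungPoset m p := ⟨γv, hγmono⟩ with hγdef
  have hαγ : α < γ := by
    refine lt_of_le_of_ne (young_le_iff.mpr ?_) ?_
    · intro b'
      by_cases hb' : b' = b
      · subst hb'
        simp only [hγdef, hγvdef, if_pos rfl]
        rw [Fin.le_def]; simp
      · simp [hγdef, hγvdef, if_neg hb']
    · intro hEq
      have := congrArg (fun t => (t.1 b).1) hEq
      simp only [hγdef, hγvdef, if_pos rfl, ↓reduceIte, Fin.val_mk] at this
      omega
  have hγβ : γ ≤ β := by
    apply young_le_iff.mpr
    intro b'
    by_cases hb' : b' = b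
    · subst hb'
      simp only [hγdef, hγvdef, if_pos rfl]
      rw [Fin.le_def]
      exact hblt
    · simp only [hγdef, hγvdef, if_neg hb']
      exact hle b'
  have hγβ' : γ = β := by
    by_contra hne2
    exact h.2 hαγ (lt_of_le_of_ne hγβ hne2)
  refine ⟨b, ?_, ?_⟩
  · rw [← hγβ']; simp [hγdef, hγvdef]
  · intro b' hb'
    rw [← hγβ']; simp [hγdef, hγvdef, if_neg hb']

section Chain

variable {c : Fin (m * p + 1) → YoungPoset m p}

lemma chain_mono (hcov : ∀ i : Fin (m * p), c i.castSucc ⋖ c i.succ) : Monotone c :=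
  (Fin.strictMono_iff_lt_succ.mpr fun i => (hcov i).1).monotone

/-- Key characterization: the count of steps where column `β` is still small is `< i`
iff the chain value at time `i` exceeds `β + a`. -/
lemma ext_count_lt_iff (h0 : c 0 = youngBot m p)
    (hcov : ∀ i : Fin (m * p), c i.castSucc ⋖ c i.succ)
    (a : Fin m) (β : Fin p) (i : Fin (m * p + 1)) :
    (Finset.univ.filter fun j : Fin (m * p) =>
        ((c j.succ).1 β).1 ≤ β.1 + a.1).card < i.1 ↔
      β.1 + a.1 < ((c i).1 β).1 := by
  have hmono := chain_mono hcov
  have hv : ∀ k k' : Fin (m * p + 1), k ≤ k' → ((c k).1 β).1 ≤ ((c k').1 β).1 := by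
    intro k k' hk
    exact Fin.le_def.mp (young_le_iff.mp (hmono hk) β)
  constructor
  · intro hcard
    by_contra hcon
    push_neg at hcon
    have hsub : (Finset.univ.filter fun j : Fin (m * p) => j.1 < i.1)
        ⊆ Finset.univ.filter fun j : Fin (m * p) => ((c j.succ).1 β).1 ≤ β.1 + a.1 := by
      intro j hj
      simp only [Finset.mem_filter, Finset.mem_univ, true_and] at hj ⊢
      have hji : j.succ ≤ i := by
        rw [Fin.le_def, Fin.val_succ]; omega
      exact le_trans (hv _ _ hji) hcon
    have hcc := Finset.card_le_card hsub
    rw [card_filter_val_lt (by omega : i.1 ≤ m * p)] at hcc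
    omega
  · intro hval
    have hi1 : 1 ≤ i.1 := by
      by_contra hi0
      have hieq : i = 0 := Fin.ext (by rw [Fin.val_zero]; omega)
      rw [hieq, h0] at hval
      have : ((youngBot m p).1 β).1 = β.1 := rfl
      omega
    have hsub : (Finset.univ.filter fun j : Fin (m * p) => ((c j.succ).1 β).1 ≤ β.1 + a.1)
        ⊆ Finset.univ.filter fun j : Fin (m * p) => j.1 < i.1 - 1 := by
      intro j hj
      simp only [Finset.mem_filter, Finset.mem_univ, true_and] at hj ⊢
      by_contra hcon
      push_neg at hcon
      have hij : i ≤ j.succ := by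
        rw [Fin.le_def, Fin.val_succ]; omega
      have := hv _ _ hij
      omega
    have hcc := Finset.card_le_card hsub
    rw [card_filter_val_lt (by omega : i.1 - 1 ≤ m * p)] at hcc
    omega

/-- The value of the linear extension at a cell. -/
def extVal (c : Fin (m * p + 1) → YoungPoset m p) (x : Fin m × Fin p) : ℕ :=
  (Finset.univ.filter fun j : Fin (m * p) =>
      ((c j.succ).1 x.2.rev).1 ≤ x.2.rev.1 + x.1.1).card

lemma extVal_lt (h0 : c 0 = youngBot m p) (hl : c (Fin.last (m * p)) = youngTop m p)
    (hcov : ∀ i : Fin (m * p), c i.castSucc ⋖ c i.succ) (x : Fin m × Fin p) :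
    extVal c x < m * p := by
  have hkey := (ext_count_lt_iff h0 hcov x.1 x.2.rev (Fin.last (m * p))).mpr ?_
  · simpa [extVal, Fin.val_last] using hkey
  · rw [hl]
    show x.2.rev.1 + x.1.1 < m + x.2.rev.1
    have := x.1.2
    omega

end Chain

lemma strictMono_val_add_le {n q : ℕ} {w : Fin q → Fin n} (hw : StrictMono w)
    {x y : Fin q} (hxy : x ≤ y) : (w x).1 + (y.1 - x.1) ≤ (w y).1 := by
  have key : ∀ d (x y : Fin q), y.1 = x.1 + d → (w x).1 + d ≤ (w y).1 := by
    intro d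
    induction d with
    | zero =>
      intro x y hxy2
      have : x = y := Fin.ext (by omega)
      subst this; omega
    | succ d ih =>
      intro x y hxy2
      have hy' : x.1 + d < q := by omega
      have h1 := ih x ⟨x.1 + d, hy'⟩ rfl
      have h2 : w ⟨x.1 + d, hy'⟩ < w y := hw (by rw [Fin.lt_def]; simp; omega)
      rw [Fin.lt_def] at h2
      omega
  have := key (y.1 - x.1) x y (by have := Fin.le_def.mp hxy; omega)
  omega

lemma extVal_mono (c : Fin (m * p + 1) → YoungPoset m p) : Monotone (extVal c) := by
  intro x y hxy
  apply Finset.card_le_card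
  intro j hj
  simp only [Finset.mem_filter, Finset.mem_univ, true_and] at hj ⊢
  have hb : y.2.rev ≤ x.2.rev := Fin.rev_le_rev.mpr hxy.2
  have hgap := strictMono_val_add_le (c j.succ).2 hb
  have hb' : y.2.rev.1 ≤ x.2.rev.1 := Fin.le_def.mp hb
  have ha : x.1.1 ≤ y.1.1 := Fin.le_def.mp hxy.1
  omega

section Inj

variable {c : Fin (m * p + 1) → YoungPoset m p}

lemma extVal_inj (h0 : c 0 = youngBot m p) (hl : c (Fin.last (m * p)) = youngTop m p)
    (hcov : ∀ i : Fin (m * p), c i.castSucc ⋖ c i.succ) :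
    Function.Injective (extVal c) := by
  intro x y hxy
  set t : Fin (m * p) := ⟨extVal c x, extVal_lt h0 hl hcov x⟩ with htdef
  have htv : t.1 = extVal c x := rfl
  obtain ⟨bs, hbs1, hbs2⟩ := covBy_step (hcov t)
  have key : ∀ z : Fin m × Fin p, extVal c z = extVal c x →
      z.2.rev = bs ∧ z.2.rev.1 + z.1.1 = ((c t.castSucc).1 bs).1 := by
    intro z hz
    have h1 : ¬ (((c t.castSucc).1 z.2.rev).1 > z.2.rev.1 + z.1.1) := by
      intro hq
      have := (ext_count_lt_iff h0 hcov z.1 z.2.rev t.castSucc).mpr hq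
      have hcount : extVal c z < t.castSucc.1 := this
      rw [hz, Fin.coe_castSucc, htv] at hcount
      omega
    push_neg at h1
    have h2 : z.2.rev.1 + z.1.1 < ((c t.succ).1 z.2.rev).1 := by
      apply (ext_count_lt_iff h0 hcov z.1 z.2.rev t.succ).mp
      show extVal c z < t.succ.1
      rw [hz, Fin.val_succ, htv]
      omega
    have hzbs : z.2.rev = bs := by
      by_contra hne
      rw [hbs2 z.2.rev hne] at h2
      omega
    refine ⟨hzbs, ?_⟩
    rw [hzbs] at h1 h2
    rw [hzbs] at *
    have := hbs1
    omega
  have kx := key x rfl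
  have ky := key y hxy.symm
  have hb2 : x.2 = y.2 := by
    have : x.2.rev = y.2.rev := by rw [kx.1, ky.1]
    have := congrArg Fin.rev this
    rwa [Fin.rev_rev, Fin.rev_rev] at this
  have hb1 : x.1 = y.1 := by
    apply Fin.ext
    have e1 := kx.2
    have e2 := ky.2
    rw [kx.1] at e1
    rw [ky.1] at e2
    omega
  exact Prod.ext hb1 hb2

/-- The linear extension associated to a maximal chain. -/
noncomputable def extEquiv (c : Fin (m * p + 1) → YoungPoset m p)
    (h0 : c 0 = youngBot m p) (hl : c (Fin.last (m * p)) = youngTop m p)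
    (hcov : ∀ i : Fin (m * p), c i.castSucc ⋖ c i.succ) :
    Fin m × Fin p ≃ Fin (m * p) :=
  Equiv.ofBijective (fun x => ⟨extVal c x, extVal_lt h0 hl hcov x⟩)
    ((Fintype.bijective_iff_injective_and_card _).mpr
      ⟨fun x y hxy => extVal_inj h0 hl hcov (congrArg Fin.val hxy), by simp⟩)

lemma extEquiv_mono (c : Fin (m * p + 1) → YoungPoset m p)
    (h0 : c 0 = youngBot m p) (hl : c (Fin.last (m * p)) = youngTop m p)
    (hcov : ∀ i : Fin (m * p), c i.castSucc ⋖ c i.succ) :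
    Monotone (extEquiv c h0 hl hcov) := by
  intro x y hxy
  show (⟨extVal c x, _⟩ : Fin (m * p)) ≤ ⟨extVal c y, _⟩
  exact Fin.mk_le_mk.mpr (extVal_mono c hxy)

end Inj

section ToChain

/-- The value of the chain built from a linear extension. -/
def chainVal (f : Fin m × Fin p → Fin (m * p)) (i : Fin (m * p + 1)) (b : Fin p) : ℕ :=
  b.1 + (Finset.univ.filter fun a : Fin m => (f (a, b.rev)).1 < i.1).card

lemma chainVal_lt (f : Fin m × Fin p → Fin (m * p)) (i : Fin (m * p + 1)) (b : Fin p) :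
    chainVal f i b < m + p := by
  have h1 : (Finset.univ.filter fun a : Fin m => (f (a, b.rev)).1 < i.1).card ≤ m := by
    calc (Finset.univ.filter fun a : Fin m => (f (a, b.rev)).1 < i.1).card
        ≤ (Finset.univ : Finset (Fin m)).card := Finset.card_filter_le _ _
      _ = m := by simp
  have := b.2
  unfold chainVal
  omega

/-- The chain built from a linear extension. -/
def toChain (f : Fin m × Fin p → Fin (m * p)) (hf : Monotone f) (i : Fin (m * p + 1)) :
    YoungPoset m p :=
  ⟨fun b => ⟨chainVal f i b, chainVal_lt f i b⟩, by
    intro b b' hbb'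
    rw [Fin.lt_def]
    show chainVal f i b < chainVal f i b'
    have hsub : (Finset.univ.filter fun a : Fin m => (f (a, b.rev)).1 < i.1)
        ⊆ Finset.univ.filter fun a : Fin m => (f (a, b'.rev)).1 < i.1 := by
      intro a ha
      simp only [Finset.mem_filter, Finset.mem_univ, true_and] at ha ⊢
      have hle : f (a, b'.rev) ≤ f (a, b.rev) :=
        hf ⟨le_refl a, Fin.rev_le_rev.mpr hbb'.le⟩
      have := Fin.le_def.mp hle
      omega
    have := Finset.card_le_card hsub
    have hbv : b.1 < b'.1 := hbb'
    unfold chainVal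
    omega⟩

lemma toChain_zero (f : Fin m × Fin p → Fin (m * p)) (hf : Monotone f) :
    toChain f hf 0 = youngBot m p := by
  apply Subtype.ext; funext b; apply Fin.ext
  show chainVal f 0 b = b.1
  unfold chainVal
  have hempty : (Finset.univ.filter fun a : Fin m => (f (a, b.rev)).1 < (0 : Fin (m*p+1)).1)
      = ∅ := by
    apply Finset.filter_false_of_mem
    intro a _
    simp
  rw [hempty]
  simp

lemma toChain_last (f : Fin m × Fin p → Fin (m * p)) (hf : Monotone f) :
    toChain f hf (Fin.last (m * p)) = youngTop m p := by
  apply Subtype.ext; funext b; apply Fin.ext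
  show chainVal f (Fin.last (m * p)) b = m + b.1
  unfold chainVal
  have huniv : (Finset.univ.filter fun a : Fin m =>
      (f (a, b.rev)).1 < (Fin.last (m * p)).1) = Finset.univ := by
    apply Finset.filter_true_of_mem
    intro a _
    simpa [Fin.val_last] using (f (a, b.rev)).2
  rw [huniv]
  simp [Nat.add_comm]

lemma covBy_of_step {α β : YoungPoset m p} (b0 : Fin p)
    (h1 : (β.1 b0).1 = (α.1 b0).1 + 1) (h2 : ∀ b, b ≠ b0 → β.1 b = α.1 b) : α ⋖ β := by
  have hle : α ≤ β := by
    apply young_le_iff.mpr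
    intro b
    by_cases hb : b = b0
    · subst hb; rw [Fin.le_def]; omega
    · rw [h2 b hb]
  constructor
  · refine lt_of_le_of_ne hle fun hEq => ?_
    rw [hEq] at h1; omega
  · intro γ hαγ hγβ
    have g1 : ∀ b, (α.1 b).1 ≤ (γ.1 b).1 := fun b => Fin.le_def.mp (young_le_iff.mp hαγ.le b)
    have g2 : ∀ b, (γ.1 b).1 ≤ (β.1 b).1 := fun b => Fin.le_def.mp (young_le_iff.mp hγβ.le b)
    have hcase : (γ.1 b0).1 = (α.1 b0).1 ∨ (γ.1 b0).1 = (β.1 b0).1 := by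
      have := g1 b0; have := g2 b0; omega
    rcases hcase with hA | hB
    · apply hαγ.ne
      apply Subtype.ext; funext b
      by_cases hb : b = b0
      · subst hb; exact Fin.ext hA.symm
      · refine le_antisymm (young_le_iff.mp hαγ.le b) ?_
        rw [← h2 b hb]
        exact young_le_iff.mp hγβ.le b
    · apply hγβ.ne
      apply Subtype.ext; funext b
      by_cases hb : b = b0
      · subst hb; exact Fin.ext hB
      · refine le_antisymm (young_le_iff.mp hγβ.le b) ?_
        rw [h2 b hb]
        exact young_le_iff.mp hαγ.le b

lemma toChain_covby (f : Fin m × Fin p ≃ Fin (m * p)) (hf : Monotone f) (i : Fin (m * p)) :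
    toChain f hf i.castSucc ⋖ toChain f hf i.succ := by
  set x0 := f.symm i with hx0def
  have hstep : ∀ b : Fin p,
      chainVal (⇑f) i.succ b = chainVal (⇑f) i.castSucc b + (if b = x0.2.rev then 1 else 0) := by
    intro b
    unfold chainVal
    have hsplit : (Finset.univ.filter fun a : Fin m => (f (a, b.rev)).1 < i.succ.1)
        = (Finset.univ.filter fun a : Fin m => (f (a, b.rev)).1 < i.castSucc.1) ∪
          (Finset.univ.filter fun a : Fin m => f (a, b.rev) = i) := by
      ext a
      simp only [Finset.mem_filter, Finset.mem_univ, true_and, Finset.mem_union,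
        Fin.val_succ, Fin.coe_castSucc, Fin.ext_iff]
      omega
    have hdisj : Disjoint (Finset.univ.filter fun a : Fin m => (f (a, b.rev)).1 < i.castSucc.1)
        (Finset.univ.filter fun a : Fin m => f (a, b.rev) = i) := by
      rw [Finset.disjoint_left]
      intro a ha1 ha2
      simp only [Finset.mem_filter, Finset.mem_univ, true_and] at ha1 ha2
      rw [ha2, Fin.coe_castSucc] at ha1
      omega
    have hsec : (Finset.univ.filter fun a : Fin m => f (a, b.rev) = i).card
        = if b = x0.2.rev then 1 else 0 := by
      by_cases hb : b = x0.2.rev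
      · rw [if_pos hb]
        have hset : (Finset.univ.filter fun a : Fin m => f (a, b.rev) = i) = {x0.1} := by
          ext a
          simp only [Finset.mem_filter, Finset.mem_univ, true_and, Finset.mem_singleton]
          rw [f.apply_eq_iff_eq_symm_apply, ← hx0def]
          constructor
          · intro h; exact congrArg Prod.fst h
          · intro h
            have hbrev : b.rev = x0.2 := by rw [hb, Fin.rev_rev]
            rw [h, hbrev]
        rw [hset]; simp
      · rw [if_neg hb]
        have hset : (Finset.univ.filter fun a : Fin m => f (a, b.rev) = i) = ∅ := by
          apply Finset.filter_false_of_mem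
          intro a _
          rw [f.apply_eq_iff_eq_symm_apply, ← hx0def]
          intro h
          apply hb
          have := congrArg Prod.snd h
          simp at this
          rw [← this, Fin.rev_rev]
        rw [hset]; simp
    rw [hsplit, Finset.card_union_of_disjoint hdisj, hsec]
    omega
  apply covBy_of_step x0.2.rev
  · show chainVal (⇑f) i.succ x0.2.rev = chainVal (⇑f) i.castSucc x0.2.rev + 1
    rw [hstep x0.2.rev, if_pos rfl]
  · intro b hb
    apply Fin.ext
    show chainVal (⇑f) i.succ b = chainVal (⇑f) i.castSucc b
    rw [hstep b, if_neg hb]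
    omega

end ToChain


section RoundTrip

lemma extVal_toChain (f : Fin m × Fin p ≃ Fin (m * p)) (hf : Monotone ⇑f)
    (a : Fin m) (b : Fin p) :
    extVal (toChain (⇑f) hf) (a, b) = (f (a, b)).1 := by
  have hcol : ∀ a1 a2 : Fin m, a1 < a2 → (f (a1, b)).1 < (f (a2, b)).1 := by
    intro a1 a2 h12
    have hle : f (a1, b) ≤ f (a2, b) := hf ⟨h12.le, le_refl b⟩
    have hne : f (a1, b) ≠ f (a2, b) := by
      intro hEq
      have := f.injective hEq
      have := congrArg Prod.fst this
      simp only [] at this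
      exact absurd this (Fin.ne_of_lt h12)
    have := lt_of_le_of_ne hle hne
    exact Fin.lt_def.mp this
  have hiff : ∀ j : Fin (m * p),
      (((toChain (⇑f) hf j.succ).1 b.rev).1 ≤ b.rev.1 + a.1) ↔ j.1 < (f (a, b)).1 := by
    intro j
    have hval : ((toChain (⇑f) hf j.succ).1 b.rev).1
        = b.rev.1 + (Finset.univ.filter fun a' : Fin m => (f (a', b)).1 < j.1 + 1).card := by
      show chainVal (⇑f) j.succ b.rev = _
      unfold chainVal
      rw [Fin.rev_rev]
      simp [Fin.val_succ]
    rw [hval]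
    constructor
    · intro hle
      by_contra hcon
      push_neg at hcon
      have hsub : (Finset.univ.filter fun a' : Fin m => a'.1 < a.1 + 1)
          ⊆ Finset.univ.filter fun a' : Fin m => (f (a', b)).1 < j.1 + 1 := by
        intro a' ha'
        simp only [Finset.mem_filter, Finset.mem_univ, true_and] at ha' ⊢
        have hle2 : (f (a', b)).1 ≤ (f (a, b)).1 := by
          rcases lt_or_eq_of_le (show a' ≤ a from Fin.le_def.mpr (by omega)) with hlt | heq
          · exact le_of_lt (hcol a' a hlt)
          · rw [heq]
        omega
      have hc := Finset.card_le_card hsub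
      rw [card_filter_val_lt (by have := a.2; omega : a.1 + 1 ≤ m)] at hc
      omega
    · intro hlt
      have hsub : (Finset.univ.filter fun a' : Fin m => (f (a', b)).1 < j.1 + 1)
          ⊆ Finset.univ.filter fun a' : Fin m => a'.1 < a.1 := by
        intro a' ha'
        simp only [Finset.mem_filter, Finset.mem_univ, true_and] at ha' ⊢
        by_contra hcon
        push_neg at hcon
        have hle2 : (f (a, b)).1 ≤ (f (a', b)).1 := by
          rcases lt_or_eq_of_le (show a ≤ a' from Fin.le_def.mpr hcon) with hlt2 | heq
          · exact le_of_lt (hcol a a' hlt2)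
          · rw [heq]
        omega
      have hc := Finset.card_le_card hsub
      rw [card_filter_val_lt (le_of_lt a.2)] at hc
      omega
  show (Finset.univ.filter fun j : Fin (m * p) =>
      ((toChain (⇑f) hf j.succ).1 b.rev).1 ≤ b.rev.1 + a.1).card = (f (a, b)).1
  have hset : (Finset.univ.filter fun j : Fin (m * p) =>
      ((toChain (⇑f) hf j.succ).1 b.rev).1 ≤ b.rev.1 + a.1)
      = Finset.univ.filter fun j : Fin (m * p) => j.1 < (f (a, b)).1 := by
    ext j
    simp only [Finset.mem_filter, Finset.mem_univ, true_and]
    exact hiff j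
  rw [hset, card_filter_val_lt (le_of_lt (f (a, b)).2)]

variable {c : Fin (m * p + 1) → YoungPoset m p}

lemma chainVal_extEquiv (h0 : c 0 = youngBot m p) (hl : c (Fin.last (m * p)) = youngTop m p)
    (hcov : ∀ i : Fin (m * p), c i.castSucc ⋖ c i.succ) (i : Fin (m * p + 1)) (b : Fin p) :
    chainVal (⇑(extEquiv c h0 hl hcov)) i b = ((c i).1 b).1 := by
  have hmono := chain_mono hcov
  have hlow : b.1 ≤ ((c i).1 b).1 := by
    have h00 : (0 : Fin (m * p + 1)) ≤ i := Fin.zero_le i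
    have := Fin.le_def.mp (young_le_iff.mp (hmono h00) b)
    rw [h0] at this
    exact this
  have hhigh : ((c i).1 b).1 ≤ m + b.1 := by
    have hli : i ≤ Fin.last (m * p) := Fin.le_last i
    have := Fin.le_def.mp (young_le_iff.mp (hmono hli) b)
    rw [hl] at this
    exact this
  have hcond : ∀ a : Fin m, extVal c (a, b.rev) < i.1 ↔ b.1 + a.1 < ((c i).1 b).1 := by
    intro a
    have h := ext_count_lt_iff h0 hcov a (b.rev.rev) i
    rw [Fin.rev_rev] at h
    have he : extVal c (a, b.rev)
        = (Finset.univ.filter fun j : Fin (m * p) =>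
            ((c j.succ).1 b).1 ≤ b.1 + a.1).card := by
      unfold extVal
      rw [Fin.rev_rev]
    rw [he]
    exact h
  show b.1 + (Finset.univ.filter fun a : Fin m =>
      ((extEquiv c h0 hl hcov) (a, b.rev)).1 < i.1).card = ((c i).1 b).1
  have hset : (Finset.univ.filter fun a : Fin m =>
      ((extEquiv c h0 hl hcov) (a, b.rev)).1 < i.1)
      = Finset.univ.filter fun a : Fin m => a.1 < ((c i).1 b).1 - b.1 := by
    ext a
    simp only [Finset.mem_filter, Finset.mem_univ, true_and]
    have : ((extEquiv c h0 hl hcov) (a, b.rev)).1 = extVal c (a, b.rev) := rfl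
    rw [this, hcond a]
    omega
  rw [hset, card_filter_val_lt (by omega : ((c i).1 b).1 - b.1 ≤ m)]
  omega

end RoundTrip

/-- The main bijection. -/
noncomputable def mainEquiv (m p : ℕ) :
    {f : Fin m × Fin p ≃ Fin (m * p) // Monotone ⇑f} ≃
    {c : Fin (m * p + 1) → YoungPoset m p //
        c 0 = youngBot m p ∧ c (Fin.last (m * p)) = youngTop m p ∧
        ∀ i : Fin (m * p), c i.castSucc ⋖ c i.succ} where
  toFun F := ⟨toChain (⇑F.1) F.2, toChain_zero _ _, toChain_last _ _, toChain_covby F.1 F.2⟩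
  invFun C := ⟨extEquiv C.1 C.2.1 C.2.2.1 C.2.2.2, extEquiv_mono C.1 C.2.1 C.2.2.1 C.2.2.2⟩
  left_inv F := by
    apply Subtype.ext
    apply Equiv.ext
    intro x
    apply Fin.ext
    show extVal (toChain (⇑F.1) F.2) x = (F.1 x).1
    obtain ⟨a, b⟩ := x
    exact extVal_toChain F.1 F.2 a b
  right_inv C := by
    apply Subtype.ext
    funext i
    apply Subtype.ext
    funext b
    apply Fin.ext
    show chainVal (⇑(extEquiv C.1 C.2.1 C.2.2.1 C.2.2.2)) i b = ((C.1 i).1 b).1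
    exact chainVal_extEquiv C.2.1 C.2.2.1 C.2.2.2 i b

end Stmt5

theorem stmt_5 (m p : ℕ) :
    Nat.card {c : Fin (m * p + 1) → YoungPoset m p //
        c 0 = youngBot m p ∧ c (Fin.last (m * p)) = youngTop m p ∧
        ∀ i : Fin (m * p), c i.castSucc ⋖ c i.succ} =
      Nat.card {f : Fin m × Fin p ≃ Fin (m * p) // Monotone f} :=
  (Nat.card_congr (Stmt5.mainEquiv m p)).symm
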